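/- Derivative recurrence (raising form) for F_{lm}: for all integers l ≥ 1, −l ≤ m ≤ l, and all x ∈ (−1, 1), (1 − x^2) F_{lm}'(x) = (l + 1) [x − m/(l+1)^2] F_{lm}(x) − (2l + 1) ζ_{l+1,m} F_{l+1,m}(x), where ζ_{lm} := (1/l)·√((l+1)(l−1)(l+m)(l−m)/((2l+1)(2l−1))). -/

import Mathlib

open MeasureTheory

/-- The (unnormalized) associated Legendre function
`P_l^m(x) = ((−1)^m / (2^l l!)) (1 − x^2)^{m/2} (d/dx)^{l+m} (x^2 − 1)^l`. -/
noncomputable def Plm (l m : ℤ) (x : ℝ) : ℝ :=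
  ((-1 : ℝ) ^ m / ((2 : ℝ) ^ l * (l.toNat.factorial : ℝ))) *
    (1 - x ^ 2) ^ ((m : ℝ) / 2) *
    iteratedDeriv (l + m).toNat (fun y : ℝ => (y ^ 2 - 1) ^ l) x

/-- The normalization factor `c_{lm} = √((2l+1)/2 · (l−m)!/(l+m)!)`. -/
noncomputable def clm (l m : ℤ) : ℝ :=
  Real.sqrt ((2 * (l : ℝ) + 1) / 2 * ((l - m).toNat.factorial : ℝ) /
    ((l + m).toNat.factorial : ℝ))

/-- The normalized associated Legendre function `U_{lm} = c_{lm} P_l^m`,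
with the convention `U_{lm} = 0` when `|m| > l`. -/
noncomputable def Ulm (l m : ℤ) (x : ℝ) : ℝ :=
  if |m| ≤ l then clm l m * Plm l m x else 0

/-- The function of Sheppard and Török
`F_{lm}(x) = (1/√(l(l+1))) [√(1−x²) U_{lm}'(x) − (m/√(1−x²)) U_{lm}(x)]`. -/
noncomputable def Flm (l m : ℤ) (x : ℝ) : ℝ :=
  (1 / Real.sqrt ((l : ℝ) * ((l : ℝ) + 1))) *
    (Real.sqrt (1 - x ^ 2) * deriv (Ulm l m) x -
      ((m : ℝ) / Real.sqrt (1 - x ^ 2)) * Ulm l m x)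

/-- The factor `ζ_{lm} = (1/l)·√((l+1)(l−1)(l+m)(l−m)/((2l+1)(2l−1)))`. -/
noncomputable def zetalm (l m : ℤ) : ℝ :=
  (1 / (l : ℝ)) *
    Real.sqrt (((l : ℝ) + 1) * ((l : ℝ) - 1) * ((l : ℝ) + m) * ((l : ℝ) - m) /
      ((2 * (l : ℝ) + 1) * (2 * (l : ℝ) - 1)))


lemma smooth_iter {f : ℝ → ℝ} (hf : ContDiff ℝ (⊤ : ℕ∞) f) (n : ℕ) :
    ContDiff ℝ (⊤ : ℕ∞) (iteratedDeriv n f) := by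
  rw [iteratedDeriv_eq_iterate]
  exact hf.iterate_deriv n

lemma deriv_iter {f : ℝ → ℝ} (n : ℕ) :
    deriv (iteratedDeriv n f) = iteratedDeriv (n + 1) f := (iteratedDeriv_succ).symm

lemma hasDerivAt_iter {f : ℝ → ℝ} (hf : ContDiff ℝ (⊤ : ℕ∞) f) (n : ℕ) (x : ℝ) :
    HasDerivAt (iteratedDeriv n f) (iteratedDeriv (n+1) f x) x := by
  rw [iteratedDeriv_succ]
  exact ((smooth_iter hf n).differentiable (by norm_num)).differentiableAt.hasDerivAt

/-- Leibniz: n-th derivative of x * g x -/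
lemma itA {g : ℝ → ℝ} (hg : ContDiff ℝ (⊤ : ℕ∞) g) (k : ℕ) :
    iteratedDeriv k (fun x => x * g x) =
      fun x => x * iteratedDeriv k g x + (k : ℝ) * iteratedDeriv (k - 1) g x := by
  induction k with
  | zero => simp
  | succ k ih =>
    rw [iteratedDeriv_succ, ih]
    funext x
    have h1 : HasDerivAt (fun x : ℝ => x * iteratedDeriv k g x + (k:ℝ) * iteratedDeriv (k-1) g x)
        (1 * iteratedDeriv k g x + x * iteratedDeriv (k+1) g x
          + (k:ℝ) * iteratedDeriv ((k-1)+1) g x) x := by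
      exact ((hasDerivAt_id x).mul (hasDerivAt_iter hg k x)).add
        ((hasDerivAt_iter hg (k-1) x).const_mul _)
    rw [h1.deriv]
    rcases k with _ | k
    · simp; ring
    · simp only [Nat.add_sub_cancel, Nat.succ_sub_one]
      push_cast; ring

/-- Leibniz: k-th derivative of (x²-1) * g x -/
lemma itB {g : ℝ → ℝ} (hg : ContDiff ℝ (⊤ : ℕ∞) g) (k : ℕ) :
    iteratedDeriv k (fun x => (x ^ 2 - 1) * g x) =
      fun x => (x ^ 2 - 1) * iteratedDeriv k g x
        + 2 * (k : ℝ) * x * iteratedDeriv (k - 1) g x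
        + (k : ℝ) * ((k : ℝ) - 1) * iteratedDeriv (k - 2) g x := by
  induction k with
  | zero => funext x; simp
  | succ k ih =>
    rw [iteratedDeriv_succ, ih]
    funext x
    have hq : HasDerivAt (fun x : ℝ => x ^ 2 - 1) (2 * x) x := by
      simpa using ((hasDerivAt_pow 2 x).sub_const 1)
    have h1 : HasDerivAt (fun x : ℝ => (x ^ 2 - 1) * iteratedDeriv k g x
        + 2 * (k:ℝ) * x * iteratedDeriv (k-1) g x
        + (k:ℝ) * ((k:ℝ) - 1) * iteratedDeriv (k-2) g x)
        ((2 * x) * iteratedDeriv k g x + (x ^ 2 - 1) * iteratedDeriv (k+1) g x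
          + ((2 * (k:ℝ)) * iteratedDeriv (k-1) g x
             + (2 * (k:ℝ) * x) * iteratedDeriv ((k-1)+1) g x)
          + (k:ℝ) * ((k:ℝ) - 1) * iteratedDeriv ((k-2)+1) g x) x := by
      refine HasDerivAt.add (HasDerivAt.add (hq.mul (hasDerivAt_iter hg k x)) ?_)
        ((hasDerivAt_iter hg (k-2) x).const_mul _)
      have := ((hasDerivAt_id x).const_mul (2 * (k:ℝ))).mul (hasDerivAt_iter hg (k-1) x)
      simpa [Pi.mul_def, mul_comm, mul_assoc, mul_left_comm] using this
    rw [h1.deriv]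
    rcases k with _ | k
    · simp; ring
    · rcases k with _ | k
      · norm_num [iteratedDeriv_succ]; ring
      · simp only [show k+1+1-1 = k+1 from rfl, show k+1+1-2 = k from rfl,
          show k+1+1+1-1 = k+1+1 from rfl, show k+1+1+1-2 = k+1 from rfl]
        push_cast; ring

lemma itC {g : ℝ → ℝ} (hg : ContDiff ℝ (⊤ : ℕ∞) g) (c : ℝ) (k : ℕ) :
    iteratedDeriv k (fun x => c * g x) = fun x => c * iteratedDeriv k g x := by
  induction k with
  | zero => rfl
  | succ k ih =>
    rw [iteratedDeriv_succ, ih, iteratedDeriv_succ]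
    funext x
    exact deriv_const_mul c ((smooth_iter hg k).differentiable (by norm_num)).differentiableAt

section core
variable (L : ℕ)

private noncomputable def ww (L : ℕ) : ℝ → ℝ := fun y => (y ^ 2 - 1) ^ L

lemma ww_smooth : ContDiff ℝ (⊤ : ℕ∞) (ww L) :=
  ((contDiff_id.pow 2).sub contDiff_const).pow L

lemma ww_hasDeriv (x : ℝ) :
    HasDerivAt (ww L) ((L : ℝ) * (x ^ 2 - 1) ^ (L - 1) * (2 * x)) x := by
  have hq : HasDerivAt (fun y : ℝ => y ^ 2 - 1) (2 * x) x := by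
    simpa using ((hasDerivAt_pow 2 x).sub_const 1)
  exact hq.pow L

lemma ww_ode (hL : 1 ≤ L) (x : ℝ) :
    (x ^ 2 - 1) * deriv (ww L) x = 2 * (L : ℝ) * (x * ww L x) := by
  rw [(ww_hasDeriv L x).deriv]
  obtain ⟨K, rfl⟩ : ∃ K, L = K + 1 := ⟨L - 1, by omega⟩
  simp only [ww, Nat.add_sub_cancel]
  push_cast; ring

lemma ww_deriv_succ (x : ℝ) :
    deriv (ww (L + 1)) x = 2 * ((L : ℝ) + 1) * (x * ww L x) := by
  rw [(ww_hasDeriv (L + 1) x).deriv]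
  simp only [ww, Nat.add_sub_cancel]
  push_cast; ring

/-- C1 -/
lemma relC1 (hL : 1 ≤ L) (n : ℕ) (x : ℝ) :
    (x ^ 2 - 1) * iteratedDeriv (n + 2) (ww L) x
      + 2 * ((n : ℝ) + 1) * x * iteratedDeriv (n + 1) (ww L) x
      + ((n : ℝ) + 1) * (n : ℝ) * iteratedDeriv n (ww L) x
    = 2 * (L : ℝ) * (x * iteratedDeriv (n + 1) (ww L) x
        + ((n : ℝ) + 1) * iteratedDeriv n (ww L) x) := by
  have hfe : (fun y => (y ^ 2 - 1) * deriv (ww L) y) = (fun y => 2 * (L:ℝ) * (y * ww L y)) :=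
    funext (ww_ode L hL)
  have h := congrFun (congrArg (iteratedDeriv (n + 1)) hfe) x
  have hds : ContDiff ℝ (⊤ : ℕ∞) (deriv (ww L)) := by
    have := smooth_iter (ww_smooth L) 1
    simpa [iteratedDeriv_succ] using this
  rw [itB hds (n+1)] at h
  have hmul : ContDiff ℝ (⊤ : ℕ∞) (fun z : ℝ => z * ww L z) := contDiff_id.mul (ww_smooth L)
  rw [show (fun y : ℝ => 2 * (L:ℝ) * (y * ww L y)) = (fun y : ℝ => (2*(L:ℝ)) * ((fun z : ℝ => z * ww L z) y)) from rfl,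
      itC hmul _ (n+1), itA (ww_smooth L) (n+1)] at h
  simp only [Nat.add_sub_cancel] at h
  have e1 : ∀ j : ℕ, iteratedDeriv j (deriv (ww L)) = iteratedDeriv (j+1) (ww L) := by
    intro j; rw [← iteratedDeriv_succ']
  rw [e1 (n+1), e1 n] at h
  have e2 : ((n:ℝ)+1) * (((n:ℝ)+1) - 1) * iteratedDeriv (n+1-2) (deriv (ww L)) x
      = ((n:ℝ)+1) * (n:ℝ) * iteratedDeriv n (ww L) x := by
    rcases n with _ | n
    · simp
    · rw [show n+1+1-2 = n from rfl, e1 n]; push_cast; ring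
  push_cast at h e2 ⊢
  rw [e2] at h
  linarith [h]
end core

section core2
variable (L : ℕ)

lemma vv_deriv_fun : deriv (ww (L+1)) = fun y : ℝ => (2*((L:ℝ)+1)) * ((fun z : ℝ => z * ww L z) y) :=
  funext fun x => by rw [ww_deriv_succ L x]; try ring

/-- C2 -/
lemma relC2 (n : ℕ) (x : ℝ) :
    iteratedDeriv (n + 2) (ww (L+1)) x
      = 2 * ((L:ℝ)+1) * (x * iteratedDeriv (n + 1) (ww L) x
          + ((n:ℝ)+1) * iteratedDeriv n (ww L) x) := by
  have hmul : ContDiff ℝ (⊤ : ℕ∞) (fun z : ℝ => z * ww L z) := contDiff_id.mul (ww_smooth L)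
  have : iteratedDeriv (n+2) (ww (L+1)) = iteratedDeriv (n+1) (deriv (ww (L+1))) :=
    iteratedDeriv_succ'
  rw [this, vv_deriv_fun L, itC hmul _ (n+1), itA (ww_smooth L) (n+1)]
  simp only [Nat.add_sub_cancel]
  push_cast; ring

/-- C3 -/
lemma relC3 (hL : 1 ≤ L) (n : ℕ) (x : ℝ) :
    (2*(L:ℝ) - (n:ℝ) + 1) * iteratedDeriv (n + 1) (ww (L+1)) x
      = 2 * ((L:ℝ)+1) * (((n:ℝ)+1) * x * iteratedDeriv n (ww L) x
          + (x^2 - 1) * iteratedDeriv (n + 1) (ww L) x) := by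
  have hmul : ContDiff ℝ (⊤ : ℕ∞) (fun z : ℝ => z * ww L z) := contDiff_id.mul (ww_smooth L)
  set D := iteratedDeriv n (ww L) x with hD
  set D1 := iteratedDeriv (n+1) (ww L) x with hD1
  set T := (n:ℝ) * iteratedDeriv (n-1) (ww L) x with hT
  -- hE
  have hE : iteratedDeriv (n+1) (ww (L+1)) x = 2*((L:ℝ)+1) * (x * D + T) := by
    have : iteratedDeriv (n+1) (ww (L+1)) = iteratedDeriv n (deriv (ww (L+1))) :=
      iteratedDeriv_succ'
    rw [this, vv_deriv_fun L, itC hmul _ n, itA (ww_smooth L) n]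
  -- hR0
  have hfe : (fun y => (y ^ 2 - 1) * deriv (ww L) y)
      = (fun y : ℝ => (2 * (L:ℝ)) * ((fun z : ℝ => z * ww L z) y)) := by
    funext y; rw [ww_ode L hL y]; try ring
  have h := congrFun (congrArg (iteratedDeriv n) hfe) x
  have hds : ContDiff ℝ (⊤ : ℕ∞) (deriv (ww L)) := by
    have := smooth_iter (ww_smooth L) 1
    simpa [iteratedDeriv_succ] using this
  rw [itB hds n, itC hmul _ n, itA (ww_smooth L) n] at h
  have e1 : ∀ j : ℕ, iteratedDeriv j (deriv (ww L)) = iteratedDeriv (j+1) (ww L) := by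
    intro j; rw [← iteratedDeriv_succ']
  rw [e1 n] at h
  have e2 : 2 * (n:ℝ) * x * iteratedDeriv (n-1) (deriv (ww L)) x = 2 * (n:ℝ) * x * D := by
    rcases n with _ | n
    · simp
    · rw [show n+1-1 = n from rfl, e1 n, hD]
  have e3 : (n:ℝ) * ((n:ℝ) - 1) * iteratedDeriv (n-2) (deriv (ww L)) x = ((n:ℝ)-1) * T := by
    rcases n with _ | n
    · simp [hT]
    · rcases n with _ | n
      · simp [hT]
      · rw [show n+2-2 = n from rfl, e1 n, hT, show n+2-1 = n+1 from rfl]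
        push_cast; ring
  simp only at h
  rw [e2, e3, ← hD, ← hT] at h
  -- now h : (x²−1)*D1 + 2n x D + (n−1)T = 2L(xD + n·W₋=T...)
  rw [hE]
  linear_combination (-(2*((L:ℝ)+1))) * h
end core2

section pointwise

lemma funeq_ww (l : ℤ) (hl : 0 ≤ l) : (fun y : ℝ => (y^2-1)^l) = ww l.toNat := by
  funext y
  have h : ((l.toNat : ℤ)) = l := Int.toNat_of_nonneg hl
  conv_lhs => rw [← h, zpow_natCast]
  rfl

lemma Ulm_eq (l m : ℤ) (hm : |m| ≤ l) : Ulm l m = fun x => clm l m * Plm l m x := by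
  funext x; simp [Ulm, hm]

lemma hasDerivAt_Plm (l m : ℤ) (hl : 1 ≤ l) (x : ℝ) (hpos : 0 < 1 - x^2) :
    HasDerivAt (Plm l m)
      (((-1 : ℝ) ^ m / ((2 : ℝ) ^ l * (l.toNat.factorial : ℝ))) *
        (((m:ℝ)/2) * (1-x^2) ^ ((m:ℝ)/2 - 1) * (-(2*x)) * iteratedDeriv (l+m).toNat (ww l.toNat) x
          + (1-x^2) ^ ((m:ℝ)/2) * iteratedDeriv ((l+m).toNat + 1) (ww l.toNat) x)) x := by
  have hq : HasDerivAt (fun y : ℝ => 1 - y^2) (-(2*x)) x := by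
    simpa using ((hasDerivAt_pow 2 x).const_sub 1)
  have hrp : HasDerivAt (fun y : ℝ => (1-y^2) ^ ((m:ℝ)/2))
      (((m:ℝ)/2) * (1-x^2) ^ ((m:ℝ)/2 - 1) * (-(2*x))) x := by
    have := hq.rpow_const (p := (m:ℝ)/2) (Or.inl hpos.ne')
    convert this using 1
    ring
  have hD := hasDerivAt_iter (ww_smooth l.toNat) (l+m).toNat x
  have h := (hrp.mul hD).const_mul ((-1 : ℝ) ^ m / ((2 : ℝ) ^ l * (l.toNat.factorial : ℝ)))
  have hPlm : Plm l m = fun y => ((-1 : ℝ) ^ m / ((2 : ℝ) ^ l * (l.toNat.factorial : ℝ))) *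
      ((1-y^2) ^ ((m:ℝ)/2) * iteratedDeriv (l+m).toNat (ww l.toNat) y) := by
    funext y
    rw [Plm, funeq_ww l (by omega)]
    ring
  rw [hPlm]
  convert h using 1
  try ring
  all_goals rfl

lemma Flm_eq (l m : ℤ) (hl : 1 ≤ l) (hm : |m| ≤ l) (x : ℝ) (hx : x ∈ Set.Ioo (-1 : ℝ) 1) :
    Flm l m x = (clm l m * ((-1:ℝ)^m / ((2:ℝ)^l * (l.toNat.factorial : ℝ)))
        / Real.sqrt ((l:ℝ) * ((l:ℝ)+1)))
      * ((1-x^2) ^ (((m:ℝ)-1)/2) *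
          ((1-x^2) * iteratedDeriv ((l+m).toNat + 1) (ww l.toNat) x
            - (m:ℝ) * (1+x) * iteratedDeriv (l+m).toNat (ww l.toNat) x)) := by
  obtain ⟨hx1, hx2⟩ := hx
  have hpos : 0 < 1 - x^2 := by nlinarith
  have hDeriv : deriv (Ulm l m) x = clm l m *
      (((-1 : ℝ) ^ m / ((2 : ℝ) ^ l * (l.toNat.factorial : ℝ))) *
        (((m:ℝ)/2) * (1-x^2) ^ ((m:ℝ)/2 - 1) * (-(2*x)) * iteratedDeriv (l+m).toNat (ww l.toNat) x
          + (1-x^2) ^ ((m:ℝ)/2) * iteratedDeriv ((l+m).toNat + 1) (ww l.toNat) x)) := by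
    rw [Ulm_eq l m hm]
    exact (((hasDerivAt_Plm l m hl x hpos)).const_mul (clm l m)).deriv
  have hUval : Ulm l m x = clm l m * (((-1 : ℝ) ^ m / ((2 : ℝ) ^ l * (l.toNat.factorial : ℝ))) *
      ((1-x^2) ^ ((m:ℝ)/2) * iteratedDeriv (l+m).toNat (ww l.toNat) x)) := by
    simp only [Ulm_eq l m hm, Plm]
    rw [funeq_ww l (by omega)]
    ring
  set s := Real.sqrt (1-x^2) with hs
  have hsp : 0 < s := Real.sqrt_pos.mpr hpos
  have hss : 1 - x^2 = s^2 := (Real.sq_sqrt hpos.le).symm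
  set G := (1-x^2) ^ (((m:ℝ)-1)/2) with hG
  have eP0 : (1-x^2) ^ ((m:ℝ)/2) = G * s := by
    rw [hG, hs, Real.sqrt_eq_rpow, ← Real.rpow_add hpos]
    congr 1; ring
  have eP1 : (1-x^2) ^ ((m:ℝ)/2 - 1) = G / s := by
    rw [hG, hs, Real.sqrt_eq_rpow, ← Real.rpow_sub hpos]
    congr 1; ring
  simp only [Flm]
  rw [hDeriv, hUval, eP0, eP1, ← hs, hss]
  have hsne : s ≠ 0 := hsp.ne'
  field_simp
  ring
end pointwise

section derivpart

lemma Flm_deriv_eq (l m : ℤ) (hl : 1 ≤ l) (hm : |m| ≤ l) (x : ℝ)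
    (hx : x ∈ Set.Ioo (-1 : ℝ) 1) :
    (1 - x^2) * deriv (Flm l m) x =
      (clm l m * ((-1:ℝ)^m / ((2:ℝ)^l * (l.toNat.factorial : ℝ)))
        / Real.sqrt ((l:ℝ) * ((l:ℝ)+1)))
      * ((1-x^2) ^ (((m:ℝ)-1)/2) *
          ((1-x^2) * (-(2*x) * iteratedDeriv ((l+m).toNat + 1) (ww l.toNat) x
              + (1-x^2) * iteratedDeriv ((l+m).toNat + 2) (ww l.toNat) x
              - (m:ℝ) * iteratedDeriv (l+m).toNat (ww l.toNat) x
              - (m:ℝ)*(1+x) * iteratedDeriv ((l+m).toNat + 1) (ww l.toNat) x)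
            - ((m:ℝ)-1) * x *
              ((1-x^2) * iteratedDeriv ((l+m).toNat + 1) (ww l.toNat) x
                - (m:ℝ)*(1+x) * iteratedDeriv (l+m).toNat (ww l.toNat) x))) := by
  obtain ⟨hx1, hx2⟩ := hx
  have hpos : 0 < 1 - x^2 := by nlinarith
  set L := l.toNat
  set n := (l+m).toNat
  set C := (clm l m * ((-1:ℝ)^m / ((2:ℝ)^l * (l.toNat.factorial : ℝ)))
        / Real.sqrt ((l:ℝ) * ((l:ℝ)+1))) with hC
  set H : ℝ → ℝ := fun y => C * ((1-y^2) ^ (((m:ℝ)-1)/2) *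
      ((1-y^2) * iteratedDeriv (n + 1) (ww L) y
        - (m:ℝ) * (1+y) * iteratedDeriv n (ww L) y)) with hH
  have hderiv_eq : deriv (Flm l m) x = deriv H x := by
    apply Filter.EventuallyEq.deriv_eq
    filter_upwards [isOpen_Ioo.mem_nhds (show x ∈ Set.Ioo (-1:ℝ) 1 from ⟨hx1, hx2⟩)] with y hy
    rw [Flm_eq l m hl hm y hy, hH]
  -- HasDerivAt for H
  have hq : HasDerivAt (fun y : ℝ => 1 - y^2) (-(2*x)) x := by
    simpa using ((hasDerivAt_pow 2 x).const_sub 1)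
  have hG' : HasDerivAt (fun y : ℝ => (1-y^2) ^ (((m:ℝ)-1)/2))
      ((((m:ℝ)-1)/2) * (1-x^2) ^ ((((m:ℝ)-1)/2) - 1) * (-(2*x))) x := by
    have := hq.rpow_const (p := ((m:ℝ)-1)/2) (Or.inl hpos.ne')
    convert this using 1
    ring
  have hD := hasDerivAt_iter (ww_smooth L) n x
  have hD1 := hasDerivAt_iter (ww_smooth L) (n+1) x
  have hQ : HasDerivAt (fun y : ℝ => (1-y^2) * iteratedDeriv (n + 1) (ww L) y
        - (m:ℝ) * (1+y) * iteratedDeriv n (ww L) y)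
      ((-(2*x)) * iteratedDeriv (n+1) (ww L) x + (1-x^2) * iteratedDeriv (n+2) (ww L) x
        - ((m:ℝ) * iteratedDeriv n (ww L) x + (m:ℝ)*(1+x) * iteratedDeriv (n+1) (ww L) x)) x := by
    refine HasDerivAt.sub (hq.mul hD1) ?_
    have h1 : HasDerivAt (fun y : ℝ => (m:ℝ) * (1+y)) (m:ℝ) x := by
      simpa using ((hasDerivAt_id x).const_add (1:ℝ)).const_mul (m:ℝ)
    have := h1.mul hD
    convert this using 1
    try ring
    all_goals rfl
  have hHd : HasDerivAt H (C * (((((m:ℝ)-1)/2) * (1-x^2) ^ ((((m:ℝ)-1)/2) - 1) * (-(2*x))) *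
      ((1-x^2) * iteratedDeriv (n + 1) (ww L) x - (m:ℝ) * (1+x) * iteratedDeriv n (ww L) x)
    + (1-x^2) ^ (((m:ℝ)-1)/2) *
      ((-(2*x)) * iteratedDeriv (n+1) (ww L) x + (1-x^2) * iteratedDeriv (n+2) (ww L) x
        - ((m:ℝ) * iteratedDeriv n (ww L) x + (m:ℝ)*(1+x) * iteratedDeriv (n+1) (ww L) x)))) x :=
    (hG'.mul hQ).const_mul C
  rw [hderiv_eq, hHd.deriv]
  have key : (1-x^2) * ((((m:ℝ)-1)/2) * (1-x^2) ^ ((((m:ℝ)-1)/2) - 1) * (-(2*x)))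
      = -(((m:ℝ)-1) * x) * (1-x^2) ^ (((m:ℝ)-1)/2) := by
    rw [Real.rpow_sub_one hpos.ne']
    field_simp
  linear_combination (((1-x^2) * iteratedDeriv (n + 1) (ww L) x
      - (m:ℝ) * (1+x) * iteratedDeriv n (ww L) x) * C) * key
end derivpart

section consts

lemma key_const (a b F1 F2 fl p P : ℝ) (ha : 1 ≤ a) (hb1 : b ≤ a) (hb2 : -a ≤ b)
    (hF1 : 0 < F1) (hF2 : 0 < F2) (hfl : 0 < fl) (hp : 0 < p) :
    (2*a+1) * (1/(a+1) * Real.sqrt ((a+1+1)*(a+1-1)*(a+1+b)*(a+1-b)/((2*(a+1)+1)*(2*(a+1)-1)))) *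
      (Real.sqrt ((2*(a+1)+1)/2 * ((a+1-b)*F1) / ((a+1+b)*F2)) * (P/(2*p*((a+1)*fl)))
        / Real.sqrt ((a+1)*(a+1+1)))
    = a*(a+1-b)/(2*(a+1)^2) *
        (Real.sqrt ((2*a+1)/2*F1/F2) * (P/(p*fl)) / Real.sqrt (a*(a+1))) := by
  have ha0 : (0:ℝ) < a := by linarith
  have hA : (0:ℝ) < a + 1 := by linarith
  have h2a : (0:ℝ) ≤ 2*a+1 := by linarith
  have hab1 : (0:ℝ) ≤ a+1-b := by linarith
  have hab2 : (0:ℝ) < a+1+b := by linarith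
  have hR1 : (0:ℝ) ≤ (a+1+1)*(a+1-1)*(a+1+b)*(a+1-b)/((2*(a+1)+1)*(2*(a+1)-1)) := by
    apply div_nonneg
    · apply mul_nonneg (mul_nonneg (mul_nonneg (by linarith) (by linarith)) hab2.le) hab1
    · nlinarith
  have hR2 : (0:ℝ) ≤ (2*(a+1)+1)/2 * ((a+1-b)*F1) / ((a+1+b)*F2) := by
    apply div_nonneg (mul_nonneg (by linarith) (mul_nonneg hab1 hF1.le))
      (mul_nonneg hab2.le hF2.le)
  have hR3 : (0:ℝ) ≤ (2*a+1)/2*F1/F2 := by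
    apply div_nonneg (mul_nonneg (by linarith) hF1.le) hF2.le
  have hS2 : (0:ℝ) < (a+1)*(a+1+1) := by nlinarith
  have hS1 : (0:ℝ) < a*(a+1) := by nlinarith
  suffices hXY : (2*a+1) * (1/(a+1) *
        Real.sqrt ((a+1+1)*(a+1-1)*(a+1+b)*(a+1-b)/((2*(a+1)+1)*(2*(a+1)-1)))) *
      (Real.sqrt ((2*(a+1)+1)/2 * ((a+1-b)*F1) / ((a+1+b)*F2)) * (1/(2*p*((a+1)*fl)))
        / Real.sqrt ((a+1)*(a+1+1)))
      = a*(a+1-b)/(2*(a+1)^2) *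
        (Real.sqrt ((2*a+1)/2*F1/F2) * (1/(p*fl)) / Real.sqrt (a*(a+1))) by
    linear_combination P * hXY
  set X := (2*a+1) * (1/(a+1) *
        Real.sqrt ((a+1+1)*(a+1-1)*(a+1+b)*(a+1-b)/((2*(a+1)+1)*(2*(a+1)-1)))) *
      (Real.sqrt ((2*(a+1)+1)/2 * ((a+1-b)*F1) / ((a+1+b)*F2)) * (1/(2*p*((a+1)*fl)))
        / Real.sqrt ((a+1)*(a+1+1))) with hX
  set Y := a*(a+1-b)/(2*(a+1)^2) *
        (Real.sqrt ((2*a+1)/2*F1/F2) * (1/(p*fl)) / Real.sqrt (a*(a+1))) with hY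
  have hXnn : 0 ≤ X := by
    rw [hX]
    apply mul_nonneg (mul_nonneg h2a (mul_nonneg (by positivity) (Real.sqrt_nonneg _)))
    apply div_nonneg (mul_nonneg (Real.sqrt_nonneg _) (by positivity)) (Real.sqrt_nonneg _)
  have hYnn : 0 ≤ Y := by
    rw [hY]
    apply mul_nonneg
    · apply div_nonneg (mul_nonneg ha0.le hab1) (by positivity)
    · apply div_nonneg (mul_nonneg (Real.sqrt_nonneg _) (by positivity)) (Real.sqrt_nonneg _)
  have hsq : X^2 = Y^2 := by
    rw [hX, hY]
    simp only [mul_pow, div_pow, one_pow]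
    rw [Real.sq_sqrt hR1, Real.sq_sqrt hR2, Real.sq_sqrt hR3,
      Real.sq_sqrt hS2.le, Real.sq_sqrt hS1.le]
    have d1 : ((2*(a+1)+1)*(2*(a+1)-1)) ≠ 0 := by nlinarith
    have d2 : (a+1+b) ≠ 0 := ne_of_gt hab2
    have d3 : F2 ≠ 0 := ne_of_gt hF2
    have d4 : p ≠ 0 := ne_of_gt hp
    have d5 : fl ≠ 0 := ne_of_gt hfl
    have d6 : (a+1) ≠ 0 := ne_of_gt hA
    have d7 : a ≠ 0 := ne_of_gt ha0
    have d8 : 2*(a+1)-1 ≠ 0 := by linarith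
    field_simp
    ring
  calc X = Real.sqrt (X^2) := (Real.sqrt_sq hXnn).symm
  _ = Real.sqrt (Y^2) := by rw [hsq]
  _ = Y := Real.sqrt_sq hYnn



lemma const_eq (l m : ℤ) (hl : 1 ≤ l) (hm₁ : -l ≤ m) (hm₂ : m ≤ l) :
    (2*(l:ℝ)+1) * zetalm (l+1) m *
      (clm (l+1) m * ((-1:ℝ)^m / ((2:ℝ)^(l+1) * (((l+1:ℤ)).toNat.factorial : ℝ)))
        / Real.sqrt ((((l+1:ℤ)):ℝ) * ((((l+1:ℤ)):ℝ)+1)))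
    = ((l:ℝ) * ((l:ℝ)+1-(m:ℝ)) / (2*((l:ℝ)+1)^2)) *
      (clm l m * ((-1:ℝ)^m / ((2:ℝ)^l * (l.toNat.factorial : ℝ)))
        / Real.sqrt ((l:ℝ) * ((l:ℝ)+1))) := by
  have ha1 : (1:ℝ) ≤ (l:ℝ) := by exact_mod_cast hl
  have hb1 : (m:ℝ) ≤ (l:ℝ) := by exact_mod_cast hm₂
  have hb2 : -(l:ℝ) ≤ (m:ℝ) := by exact_mod_cast hm₁
  -- factorial rewrites
  have hf1 : (((l+1-m).toNat.factorial : ℝ)) = ((l:ℝ)+1-(m:ℝ)) * ((l-m).toNat.factorial : ℝ) := by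
    have h : (l+1-m).toNat = (l-m).toNat + 1 := by omega
    have e : (((l-m).toNat:ℕ):ℝ) = (l:ℝ)-(m:ℝ) := by
      exact_mod_cast congrArg (fun z : ℤ => (z : ℝ)) (Int.toNat_of_nonneg (by omega : (0:ℤ) ≤ l - m))
    rw [h, Nat.factorial_succ]
    push_cast
    rw [e]; ring
  have hf2 : (((l+1+m).toNat.factorial : ℝ)) = ((l:ℝ)+1+(m:ℝ)) * ((l+m).toNat.factorial : ℝ) := by
    have h : (l+1+m).toNat = (l+m).toNat + 1 := by omega
    have e : (((l+m).toNat:ℕ):ℝ) = (l:ℝ)+(m:ℝ) := by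
      exact_mod_cast congrArg (fun z : ℤ => (z : ℝ)) (Int.toNat_of_nonneg (by omega : (0:ℤ) ≤ l + m))
    rw [h, Nat.factorial_succ]
    push_cast
    rw [e]; ring
  have hf3 : ((((l+1:ℤ)).toNat.factorial : ℝ)) = ((l:ℝ)+1) * (l.toNat.factorial : ℝ) := by
    have h : (l+1).toNat = l.toNat + 1 := by omega
    have e : ((l.toNat:ℕ):ℝ) = (l:ℝ) := by
      exact_mod_cast congrArg (fun z : ℤ => (z : ℝ)) (Int.toNat_of_nonneg (by omega : (0:ℤ) ≤ l))
    rw [h, Nat.factorial_succ]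
    push_cast
    rw [e]; try ring
  have hp2 : ((2:ℝ))^(l+1) = 2 * (2:ℝ)^l := by
    rw [zpow_add_one₀ (by norm_num : (2:ℝ) ≠ 0)]
    ring
  -- nonneg facts for radicands
  have hF1 : (0:ℝ) < ((l-m).toNat.factorial : ℝ) := by exact_mod_cast (l-m).toNat.factorial_pos
  have hF2 : (0:ℝ) < ((l+m).toNat.factorial : ℝ) := by exact_mod_cast (l+m).toNat.factorial_pos
  have hfl : (0:ℝ) < (l.toNat.factorial : ℝ) := by exact_mod_cast l.toNat.factorial_pos
  have hrz : (0:ℝ) ≤ (((l:ℝ)+1) + 1) * (((l:ℝ)+1) - 1) * (((l:ℝ)+1) + (m:ℝ)) * (((l:ℝ)+1) - (m:ℝ))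
      / ((2 * ((l:ℝ)+1) + 1) * (2 * ((l:ℝ)+1) - 1)) := by
    apply div_nonneg
    · apply mul_nonneg; apply mul_nonneg; apply mul_nonneg
      all_goals nlinarith
    · nlinarith
  have hrc2 : (0:ℝ) ≤ (2 * (((l+1:ℤ)):ℝ) + 1) / 2 * (((l+1-m).toNat.factorial : ℝ))
      / (((l+1+m).toNat.factorial : ℝ)) := by
    apply div_nonneg
    apply mul_nonneg
    · push_cast; nlinarith
    · positivity
    · positivity
  have hrc1 : (0:ℝ) ≤ (2 * (l:ℝ) + 1) / 2 * (((l-m).toNat.factorial : ℝ))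
      / (((l+m).toNat.factorial : ℝ)) := by
    apply div_nonneg
    apply mul_nonneg
    · nlinarith
    · positivity
    · positivity
  have hs1 : (0:ℝ) ≤ (((l+1:ℤ)):ℝ) * ((((l+1:ℤ)):ℝ)+1) := by push_cast; nlinarith
  have hs0 : (0:ℝ) ≤ (l:ℝ) * ((l:ℝ)+1) := by nlinarith
  have hplpos : (0:ℝ) < (2:ℝ)^l := by positivity
  have h := key_const (l:ℝ) (m:ℝ) ((l-m).toNat.factorial : ℝ) ((l+m).toNat.factorial : ℝ)
    (l.toNat.factorial : ℝ) ((2:ℝ)^l) ((-1:ℝ)^m) ha1 hb1 hb2 hF1 hF2 hfl hplpos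
  simp only [zetalm, clm]
  rw [hf1, hf2, hf3, hp2]
  push_cast
  convert h using 2 <;> try ring
end consts

lemma core_poly (a b x C C2 Z G D D1 D2 E E1 : ℝ)
    (hx2 : x^2 ≠ 1) (hane : a - b + 1 ≠ 0) (ha1 : a + 1 ≠ 0)
    (c1 : (x^2-1)*D2 + 2*(a+b+1)*x*D1 + (a+b+1)*(a+b)*D = 2*a*(x*D1 + (a+b+1)*D))
    (c2 : E1 = 2*(a+1)*(x*D1 + (a+b+1)*D))
    (c3 : (2*a-(a+b)+1)*E = 2*(a+1)*((a+b+1)*x*D + (x^2-1)*D1))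
    (h4 : (2*a+1)*Z*C2 = a*(a+1-b)/(2*(a+1)^2) * C) :
    C * (G * ((1-x^2) * (-(2*x)*D1 + (1-x^2)*D2 - b*D - b*(1+x)*D1)
        - (b-1)*x*((1-x^2)*D1 - b*(1+x)*D)))
    = (a+1)*(x - b/(a+1)^2) * (C * (G * ((1-x^2)*D1 - b*(1+x)*D)))
      - (2*a+1)*Z*(C2 * (G * ((1-x^2)*E1 - b*(1+x)*E))) := by
  have hz : (2*a+1)*Z*(C2 * (G * ((1-x^2)*E1 - b*(1+x)*E)))
      = (a*(a+1-b)/(2*(a+1)^2) * C) * (G * ((1-x^2)*E1 - b*(1+x)*E)) := by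
    linear_combination (G * ((1-x^2)*E1 - b*(1+x)*E)) * h4
  rw [hz]
  have h1x : (1:ℝ) - x^2 ≠ 0 := by intro h; apply hx2; linarith
  have hD2v : D2 = (2*(b+1)*x*D1 + (a+b+1)*(b-a)*D)/(1-x^2) := by
    rw [eq_div_iff h1x]; linear_combination -c1
  have hEv : E = 2*(a+1)*((a+b+1)*x*D + (x^2-1)*D1)/(a-b+1) := by
    rw [eq_div_iff hane]; linear_combination c3
  rw [hD2v, hEv, c2]
  field_simp
  ring

/-- Derivative recurrence (raising form) for `F_{lm}`. -/
theorem Flm_deriv_recurrence_upper (l m : ℤ) (hl : 1 ≤ l) (hm₁ : -l ≤ m) (hm₂ : m ≤ l)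
    (x : ℝ) (hx : x ∈ Set.Ioo (-1 : ℝ) 1) :
    (1 - x ^ 2) * deriv (Flm l m) x =
      ((l : ℝ) + 1) * (x - (m : ℝ) / ((l : ℝ) + 1) ^ 2) * Flm l m x -
        (2 * (l : ℝ) + 1) * zetalm (l + 1) m * Flm (l + 1) m x := by
  have hmabs : |m| ≤ l := abs_le.mpr ⟨hm₁, hm₂⟩
  have hmabs2 : |m| ≤ l + 1 := by omega
  have hl2 : (1:ℤ) ≤ l + 1 := by omega
  have ecl : ((l.toNat : ℕ) : ℝ) = (l : ℝ) := by
    exact_mod_cast congrArg (fun z : ℤ => (z : ℝ)) (Int.toNat_of_nonneg (by omega : (0:ℤ) ≤ l))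
  have ecn : (((l + m).toNat : ℕ) : ℝ) = (l : ℝ) + (m : ℝ) := by
    have := congrArg (fun z : ℤ => (z : ℝ)) (Int.toNat_of_nonneg (by omega : (0:ℤ) ≤ l + m))
    push_cast at this
    exact_mod_cast this
  have hL1 : 1 ≤ l.toNat := by omega
  have c1 := relC1 l.toNat hL1 (l+m).toNat x
  have c2 := relC2 l.toNat (l+m).toNat x
  have c3 := relC3 l.toNat hL1 (l+m).toNat x
  rw [ecl, ecn] at c1 c2 c3
  have h4 := const_eq l m hl hm₁ hm₂
  rw [show (l+1).toNat = l.toNat + 1 from by omega] at h4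
  rw [Flm_deriv_eq l m hl hmabs x hx, Flm_eq l m hl hmabs x hx,
    Flm_eq (l+1) m hl2 hmabs2 x hx,
    show (l+1+m).toNat = (l+m).toNat + 1 from by omega,
    show (l+1).toNat = l.toNat + 1 from by omega,
    show (l+m).toNat + 1 + 1 = (l+m).toNat + 2 from rfl]
  have hane : ((l:ℝ) - (m:ℝ) + 1) ≠ 0 := by
    have : (m:ℝ) ≤ (l:ℝ) := by exact_mod_cast hm₂
    linarith
  have ha1 : ((l:ℝ) + 1) ≠ 0 := by
    have : (1:ℝ) ≤ (l:ℝ) := by exact_mod_cast hl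
    linarith
  have hx2 : x^2 ≠ 1 := by
    obtain ⟨h1, h2⟩ := hx
    nlinarith
  linear_combination core_poly (l:ℝ) (m:ℝ) x
    (clm l m * ((-1:ℝ)^m / ((2:ℝ)^l * (l.toNat.factorial : ℝ))) / Real.sqrt ((l:ℝ) * ((l:ℝ)+1)))
    (clm (l+1) m * ((-1:ℝ)^m / ((2:ℝ)^(l+1) * ((l.toNat+1).factorial : ℝ)))
      / Real.sqrt (((l+1:ℤ):ℝ) * (((l+1:ℤ):ℝ)+1)))
    (zetalm (l+1) m)
    ((1-x^2) ^ (((m:ℝ)-1)/2))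
    (iteratedDeriv (l+m).toNat (ww l.toNat) x)
    (iteratedDeriv ((l+m).toNat + 1) (ww l.toNat) x)
    (iteratedDeriv ((l+m).toNat + 2) (ww l.toNat) x)
    (iteratedDeriv ((l+m).toNat + 1) (ww (l.toNat + 1)) x)
    (iteratedDeriv ((l+m).toNat + 2) (ww (l.toNat + 1)) x)
    hx2 hane ha1 c1 c2 c3 h4
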